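/- Fix ε > 0, k ≥ 2, and l ∈ {1,…,k−1}. Suppose each modulus satisfies nᵢ ≤ C·(1/ε)^(1/k) and the product of any l of them bounds the per-round circuit depth via N/Nᵢ where Nᵢ is a product of l moduli. Then the maximal oracle-call depth per round is at most C^(k−l)·(1/ε)^(1−l/k), and the total number of oracle calls over all rounds is O((1/ε)^(1+l/k)). -/

import Mathlib

open Finset

/-- Depth/query tradeoff of QoPrime QAE: with `k` coprime moduli each of size
at most `C·(1/ε)^{1/k}`, estimating the amplitude modulo a product `N_S` of
`l` of them uses per-round circuits of oracle depth `N/N_S = ∏_{i∉S} nᵢ`,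
bounded by `C^{k−l}·(1/ε)^{1−l/k}`, while the total number of oracle calls
(depth times the `N_S²` repetitions) is `O((1/ε)^{1+l/k})`. -/
theorem qoprime_depth_query_tradeoff
    (k l : ℕ) (hk : 2 ≤ k) (hl1 : 1 ≤ l) (hlk : l ≤ k - 1)
    (ε C : ℝ) (hε : 0 < ε) (hC : 0 < C)
    (n : Fin k → ℝ) (hn1 : ∀ i, 1 ≤ n i)
    (hbound : ∀ i, n i ≤ C * (1 / ε) ^ ((1 : ℝ) / k))
    (S : Finset (Fin k)) (hScard : S.card = l) :
    (∏ i ∈ Sᶜ, n i) ≤ C ^ (k - l) * (1 / ε) ^ (1 - (l : ℝ) / k) ∧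
    (∏ i ∈ Sᶜ, n i) * (∏ i ∈ S, n i) ^ 2 ≤
      C ^ (k + l) * (1 / ε) ^ (1 + (l : ℝ) / k) := by
  have hkR : (0:ℝ) < (k:ℝ) := by exact_mod_cast (by omega : 0 < k)
  have hie : (0:ℝ) ≤ 1/ε := by positivity
  set x := (1/ε) ^ ((1:ℝ)/k) with hxdef
  have hx0 : 0 ≤ x := Real.rpow_nonneg hie _
  have hlek : l ≤ k := by omega
  have hcompl : Sᶜ.card = k - l := by
    rw [card_compl, hScard, Fintype.card_fin]
  have key : ∀ m : ℕ, x ^ m = (1/ε) ^ ((m:ℝ)/(k:ℝ)) := by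
    intro m
    rw [hxdef, ← Real.rpow_natCast ((1/ε) ^ ((1:ℝ)/k)) m, ← Real.rpow_mul hie]
    congr 1
    field_simp
  have hP1 : ∏ i ∈ Sᶜ, n i ≤ (C*x)^(k-l) := by
    calc ∏ i ∈ Sᶜ, n i ≤ ∏ _i ∈ Sᶜ, (C*x) :=
          Finset.prod_le_prod (fun i _ => le_trans zero_le_one (hn1 i))
            (fun i _ => hbound i)
    _ = (C*x)^(k-l) := by rw [Finset.prod_const, hcompl]
  have hP2 : ∏ i ∈ S, n i ≤ (C*x)^l := by
    calc ∏ i ∈ S, n i ≤ ∏ _i ∈ S, (C*x) :=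
          Finset.prod_le_prod (fun i _ => le_trans zero_le_one (hn1 i))
            (fun i _ => hbound i)
    _ = (C*x)^l := by rw [Finset.prod_const, hScard]
  have e1 : ((k-l : ℕ):ℝ)/(k:ℝ) = 1 - (l:ℝ)/k := by
    rw [Nat.cast_sub hlek]; field_simp
  have e2 : ((k+l : ℕ):ℝ)/(k:ℝ) = 1 + (l:ℝ)/k := by
    push_cast; field_simp
  constructor
  · calc ∏ i ∈ Sᶜ, n i ≤ (C*x)^(k-l) := hP1
    _ = C^(k-l) * x^(k-l) := mul_pow _ _ _
    _ = C^(k-l) * (1/ε) ^ (1 - (l:ℝ)/k) := by rw [key, e1]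
  · have hprodS0 : 0 ≤ ∏ i ∈ S, n i :=
      Finset.prod_nonneg (fun i _ => le_trans zero_le_one (hn1 i))
    have hprodC0 : 0 ≤ ∏ i ∈ Sᶜ, n i :=
      Finset.prod_nonneg (fun i _ => le_trans zero_le_one (hn1 i))
    calc (∏ i ∈ Sᶜ, n i) * (∏ i ∈ S, n i) ^ 2
        ≤ (C*x)^(k-l) * ((C*x)^l)^2 := by
          apply mul_le_mul hP1 (pow_le_pow_left₀ hprodS0 hP2 2)
            (by positivity) (by positivity)
    _ = (C*x)^(k+l) := by
          rw [← pow_mul, ← pow_add]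
          congr 1
          omega
    _ = C^(k+l) * x^(k+l) := mul_pow _ _ _
    _ = C^(k+l) * (1/ε) ^ (1 + (l:ℝ)/k) := by rw [key, e2]
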